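/- For integers 1 ≤ ℓ ≤ 2x - 1 and real x ≥ 1, exp(1/(32x) - (ℓ+1/2)²/(8x)) < (4x)^ℓ / ((4x+1)(4x+2)⋯(4x+ℓ)) < exp(1/(32x) - (ℓ+1/2)²/(8x) + (ℓ+1/2)³/(96x²)). -/

import Mathlib

open Real

private lemma sum1 (l : ℕ) : ∑ j ∈ Finset.range l, ((j:ℝ)+1) = l*(l+1)/2 := by
  induction l with
  | zero => simp
  | succ n ih => rw [Finset.sum_range_succ, ih]; push_cast; ring

private lemma sum2 (l : ℕ) : ∑ j ∈ Finset.range l, ((j:ℝ)+1)^2 = (l:ℝ)*((l:ℝ)+1)*(2*(l:ℝ)+1)/6 := by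
  induction l with
  | zero => simp
  | succ n ih => rw [Finset.sum_range_succ, ih]; push_cast; ring

private lemma log_lb {t : ℝ} (ht : 0 < t) (ht1 : t ≤ 1) : t - t^2/2 < Real.log (1+t) := by
  have hb := Real.exp_bound (x := t) (by rw [abs_of_pos ht]; exact ht1) (n := 3) (by norm_num)
  rw [abs_of_pos ht] at hb
  have hsum : ∑ m ∈ Finset.range 3, t ^ m / (m.factorial : ℝ) = 1 + t + t^2/2 := by
    simp [Finset.sum_range_succ]
  rw [hsum] at hb
  norm_num [Nat.factorial] at hb
  rw [abs_le] at hb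
  have h1 : Real.exp t < (1+t)*(1+t^2/2) := by
    nlinarith [pow_pos ht 3, hb.1, hb.2]
  have h2 : (1+t)*(1+t^2/2) ≤ (1+t) * Real.exp (t^2/2) := by
    have := Real.add_one_le_exp (t^2/2)
    nlinarith
  have h3 : Real.exp t < (1+t) * Real.exp (t^2/2) := lt_of_lt_of_le h1 h2
  have h4 : t < Real.log (1+t) + t^2/2 := by
    have hpos : 0 < (1+t) * Real.exp (t^2/2) := by positivity
    have := Real.log_lt_log (Real.exp_pos t) h3
    rwa [Real.log_exp, Real.log_mul (by linarith) (Real.exp_ne_zero _), Real.log_exp] at this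
  linarith

theorem product_exponential_bounds (x : ℝ) (hx : 1 ≤ x) (l : ℕ) (hl1 : 1 ≤ l)
    (hl2 : (l : ℝ) ≤ 2 * x - 1) :
    Real.exp (1 / (32 * x) - ((l : ℝ) + 1/2) ^ 2 / (8 * x)) <
      (4 * x) ^ l / (∏ j ∈ Finset.range l, (4 * x + (j + 1))) ∧
    (4 * x) ^ l / (∏ j ∈ Finset.range l, (4 * x + (j + 1))) <
      Real.exp (1 / (32 * x) - ((l : ℝ) + 1/2) ^ 2 / (8 * x) +
        ((l : ℝ) + 1/2) ^ 3 / (96 * x ^ 2)) := by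
  have hx0 : (0:ℝ) < x := by linarith
  have h4x : (0:ℝ) < 4*x := by linarith
  set t : ℕ → ℝ := fun j => ((j:ℝ)+1)/(4*x) with ht
  have htpos : ∀ j ∈ Finset.range l, 0 < t j := by
    intro j _; positivity
  have ht1 : ∀ j ∈ Finset.range l, t j ≤ 1 := by
    intro j hj
    have hjl : (j:ℝ) + 1 ≤ l := by
      have := Finset.mem_range.mp hj
      exact_mod_cast Nat.succ_le_of_lt this
    have : (j:ℝ) + 1 ≤ 4*x := by linarith
    rw [ht]; rw [div_le_one h4x]; exact this
  have hfac : ∀ j ∈ Finset.range l, 4*x + ((j:ℝ)+1) = 4*x * (1 + t j) := by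
    intro j _; simp only [ht]; field_simp
  have hQpos : 0 < ∏ j ∈ Finset.range l, (1 + t j) :=
    Finset.prod_pos (fun j hj => by linarith [htpos j hj])
  have hprod : ∏ j ∈ Finset.range l, (4*x + ((j:ℝ)+1)) =
      (4*x)^l * ∏ j ∈ Finset.range l, (1 + t j) := by
    rw [Finset.prod_congr rfl hfac, Finset.prod_mul_distrib, Finset.prod_const,
      Finset.card_range]
  have hratio : (4*x)^l / (∏ j ∈ Finset.range l, (4*x + ((j:ℝ)+1))) =
      Real.exp (- ∑ j ∈ Finset.range l, Real.log (1 + t j)) := by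
    rw [hprod, Real.exp_neg, ← Real.log_prod (fun j hj => by
      have := htpos j hj; intro h; linarith), Real.exp_log hQpos]
    rw [div_mul_cancel_left₀ (by positivity : (4*x)^l ≠ 0)]
  have hne : (Finset.range l).Nonempty := Finset.nonempty_range_iff.mpr (by omega)
  set S := ∑ j ∈ Finset.range l, Real.log (1 + t j) with hS
  have hsumt : ∑ j ∈ Finset.range l, t j = (l:ℝ)*(l+1)/(8*x) := by
    rw [ht]
    rw [← Finset.sum_div, sum1]
    ring
  have hsumt2 : ∑ j ∈ Finset.range l, (t j)^2 = (l:ℝ)*(l+1)*(2*l+1)/(96*x^2) := by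
    simp only [ht, div_pow]
    rw [← Finset.sum_div, sum2]
    ring
  have hub : S < (l:ℝ)*(l+1)/(8*x) := by
    rw [← hsumt]
    refine Finset.sum_lt_sum_of_nonempty hne (fun j hj => ?_)
    have h0 := htpos j hj
    have := Real.log_lt_sub_one_of_pos (x := 1 + t j) (by linarith) (by intro h; nlinarith)
    linarith
  have hlb : (l:ℝ)*(l+1)/(8*x) - (l:ℝ)*(l+1)*(2*l+1)/(192*x^2) < S := by
    have : ∑ j ∈ Finset.range l, (t j - (t j)^2/2) < S :=
      Finset.sum_lt_sum_of_nonempty hne (fun j hj => log_lb (htpos j hj) (ht1 j hj))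
    rw [Finset.sum_sub_distrib] at this
    simp only [← Finset.sum_div] at this
    rw [hsumt] at this
    have h2 : ∑ j ∈ Finset.range l, (t j)^2 = (l:ℝ)*(l+1)*(2*l+1)/(96*x^2) := hsumt2
    rw [h2] at this
    have heq2 : ((l:ℝ)*((l:ℝ)+1)*(2*(l:ℝ)+1)/(96*x^2))/2
        = (l:ℝ)*((l:ℝ)+1)*(2*(l:ℝ)+1)/(192*x^2) := by ring
    linarith [this, heq2]
  constructor
  · rw [hratio, Real.exp_lt_exp]
    have : ((l:ℝ)+1/2)^2/(8*x) - 1/(32*x) = (l:ℝ)*(l+1)/(8*x) := by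
      field_simp; ring
    linarith
  · rw [hratio, Real.exp_lt_exp]
    have key : (l:ℝ)*(l+1)*(2*l+1)/(192*x^2) < ((l:ℝ)+1/2)^3/(96*x^2) := by
      rw [div_lt_div_iff₀ (by positivity) (by positivity)]
      have hl0 : (1:ℝ) ≤ (l:ℝ) := by exact_mod_cast hl1
      nlinarith [sq_nonneg ((l:ℝ)), hx0]
    have heq : ((l:ℝ)+1/2)^2/(8*x) - 1/(32*x) = (l:ℝ)*(l+1)/(8*x) := by
      field_simp; ring
    linarith
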